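/- Let G be a finite simple connected graph on vertex set V with at least two vertices, and let c : V → ℝ be uniquely balanced with respect to G. Then for every spanning subgraph H of G, there exists θ : V → ℝ with L_H θ = c if and only if H is connected. -/

import Mathlib

set_option maxHeartbeats 1000000


open Matrix
open scoped Classical

/-- `c : V → ℝ` is *uniquely balanced* with respect to `G` if its entries sum to zero over `V`,
and sum to a nonzero value over every nonempty proper subset `S ⊊ V` inducing a connected
subgraph of `G`. -/
def UniquelyBalanced {V : Type} [Fintype V] (G : SimpleGraph V) (c : V → ℝ) : Prop :=
  (∑ v, c v = 0) ∧
    ∀ S : Set V, S.Nonempty → S ≠ Set.univ → (G.induce S).Connected →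
      ∑ v ∈ S.toFinset, c v ≠ 0

lemma sum_lapMatrix_mulVec_eq_zero {V : Type} [Fintype V] [DecidableEq V]
    (H : SimpleGraph V) (θ : V → ℝ) : ∑ v, (H.lapMatrix ℝ *ᵥ θ) v = 0 := by
  have h1 : ∑ v, (H.lapMatrix ℝ *ᵥ θ) v = (fun _ : V => (1:ℝ)) ⬝ᵥ (H.lapMatrix ℝ *ᵥ θ) := by
    simp [dotProduct]
  rw [h1, Matrix.dotProduct_mulVec, ← Matrix.mulVec_transpose,
    show (H.lapMatrix ℝ)ᵀ = H.lapMatrix ℝ from H.isSymm_lapMatrix (R := ℝ), H.lapMatrix_mulVec_const_eq_zero]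
  simp

/-- For a finite simple connected graph `G` on at least two vertices and a
uniquely balanced vector `c`, a spanning subgraph `H ≤ G` admits a solution of `L_H θ = c`
iff `H` is connected. -/
theorem lapMatrix_solvable_iff_connected_of_uniquelyBalanced
    {V : Type} [Fintype V] [DecidableEq V]
    (G : SimpleGraph V) (hG : G.Connected) (hcard : 2 ≤ Fintype.card V)
    (c : V → ℝ) (hc : UniquelyBalanced G c) :
    ∀ H : SimpleGraph V, H ≤ G →
      ((∃ θ : V → ℝ, H.lapMatrix ℝ *ᵥ θ = c) ↔ H.Connected) := by
  obtain ⟨hsum, hprop⟩ := hc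
  have hne : Nonempty V := Fintype.card_pos_iff.mp (by omega)
  intro H hHG
  constructor
  · rintro ⟨θ, hθ⟩
    by_contra hnc
    obtain ⟨v0⟩ := hne
    set S : Set V := {u | H.Reachable v0 u} with hS
    have hv0S : v0 ∈ S := ⟨SimpleGraph.Walk.nil⟩
    have hSne : S.Nonempty := ⟨v0, hv0S⟩
    -- S ≠ univ
    have hSnu : S ≠ Set.univ := by
      intro h
      apply hnc
      rw [SimpleGraph.connected_iff]
      refine ⟨fun u w => ?_, ⟨v0⟩⟩
      have hu : u ∈ S := h ▸ Set.mem_univ u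
      have hw : w ∈ S := h ▸ Set.mem_univ w
      exact hu.symm.trans hw
    -- G.induce S is connected
    have hGind : (G.induce S).Connected := by
      apply G.induce_connected_of_patches v0 hv0S
      intro v hv
      obtain ⟨p⟩ := hv
      have hsub : {x | x ∈ (p.map (SimpleGraph.Hom.ofLE hHG)).support} ⊆ S := by
        intro x hx
        rw [SimpleGraph.Walk.support_map] at hx
        simp only [List.mem_map] at hx
        obtain ⟨y, hy, rfl⟩ := hx
        exact ⟨p.takeUntil y hy⟩
      refine ⟨_, hsub, ?_, ?_, ?_⟩
      · exact SimpleGraph.Walk.start_mem_support _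
      · exact SimpleGraph.Walk.end_mem_support _
      · exact ((p.map (SimpleGraph.Hom.ofLE hHG)).connected_induce_support).preconnected _ _
    -- indicator of S is in the kernel of L_H
    set ind : V → ℝ := fun u => if u ∈ S then (1:ℝ) else 0 with hind
    have hker : H.lapMatrix ℝ *ᵥ ind = 0 := by
      have := (H.lapMatrix_mulVec_eq_zero_iff_forall_reachable (x := ind)).mpr ?_
      · exact this
      · intro i j hij
        simp only [hind]
        have : i ∈ S ↔ j ∈ S := ⟨fun h => h.trans hij, fun h => h.trans hij.symm⟩
        by_cases hi : i ∈ S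
        · rw [if_pos hi, if_pos (this.mp hi)]
        · rw [if_neg hi, if_neg (fun h => hi (this.mpr h))]
    have hzero : ∑ v ∈ Finset.univ.filter (fun v => v ∈ S), c v = 0 := by
      have h1 : ∑ v ∈ Finset.univ.filter (fun v => v ∈ S), c v = ind ⬝ᵥ c := by
        rw [dotProduct]
        rw [← Finset.sum_filter_add_sum_filter_not Finset.univ (fun v => v ∈ S)]
        have h2 : ∑ v ∈ Finset.univ.filter (fun v => v ∈ S), ind v * c v
            = ∑ v ∈ Finset.univ.filter (fun v => v ∈ S), c v := by
          apply Finset.sum_congr rfl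
          intro v hv
          simp only [Finset.mem_filter] at hv
          simp [hind, hv.2]
        have h3 : ∑ v ∈ Finset.univ.filter (fun v => ¬ v ∈ S), ind v * c v = 0 := by
          apply Finset.sum_eq_zero
          intro v hv
          simp only [Finset.mem_filter] at hv
          simp [hind, hv.2]
        rw [h2, h3, add_zero]
      rw [h1, ← hθ, Matrix.dotProduct_mulVec, ← Matrix.mulVec_transpose,
        show (H.lapMatrix ℝ)ᵀ = H.lapMatrix ℝ from H.isSymm_lapMatrix (R := ℝ), hker]
      simp
    refine hprop S hSne hSnu hGind ?_
    refine Eq.trans (Finset.sum_congr ?_ fun _ _ => rfl) hzero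
    ext v; simp
  · intro hconn
    -- kernel of L_H has dimension 1
    have hcomp : Fintype.card H.ConnectedComponent = 1 := by
      rw [Fintype.card_eq_one_iff]
      obtain ⟨v0⟩ := hne
      refine ⟨H.connectedComponentMk v0, ?_⟩
      intro x
      induction x using SimpleGraph.ConnectedComponent.ind with
      | _ v => exact SimpleGraph.ConnectedComponent.sound (hconn.preconnected v v0)
    have hkerdim : Module.finrank ℝ (LinearMap.ker (Matrix.toLin' (H.lapMatrix ℝ))) = 1 := by
      rw [← H.card_connectedComponent_eq_finrank_ker_toLin'_lapMatrix, hcomp]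
    -- the sum functional
    set f : (V → ℝ) →ₗ[ℝ] ℝ :=
      { toFun := fun x => ∑ v, x v
        map_add' := fun x y => by simp [Finset.sum_add_distrib]
        map_smul' := fun r x => by simp [Finset.mul_sum] } with hf
    have hrange_le : LinearMap.range (Matrix.toLin' (H.lapMatrix ℝ)) ≤ LinearMap.ker f := by
      rintro _ ⟨θ, rfl⟩
      simp only [LinearMap.mem_ker, hf, Matrix.toLin'_apply, LinearMap.coe_mk, AddHom.coe_mk]
      exact sum_lapMatrix_mulVec_eq_zero H θ
    have hfsurj : LinearMap.range f = ⊤ := by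
      rw [LinearMap.range_eq_top]
      intro r
      obtain ⟨v0⟩ := hne
      refine ⟨fun v => if v = v0 then r else 0, ?_⟩
      simp [hf]
    have hVdim : Module.finrank ℝ (V → ℝ) = Fintype.card V := by
      simp [Module.finrank_pi]
    have hkerf : Module.finrank ℝ (LinearMap.ker f) = Fintype.card V - 1 := by
      have := LinearMap.finrank_range_add_finrank_ker f
      rw [hfsurj] at this
      simp only [finrank_top, Module.finrank_self] at this
      omega
    have hrangedim : Module.finrank ℝ (LinearMap.range (Matrix.toLin' (H.lapMatrix ℝ)))
        = Fintype.card V - 1 := by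
      have := LinearMap.finrank_range_add_finrank_ker (Matrix.toLin' (H.lapMatrix ℝ))
      rw [hkerdim, hVdim] at this
      omega
    have heq : LinearMap.range (Matrix.toLin' (H.lapMatrix ℝ)) = LinearMap.ker f := by
      apply Submodule.eq_of_le_of_finrank_le hrange_le
      rw [hrangedim, hkerf]
    have hcmem : c ∈ LinearMap.range (Matrix.toLin' (H.lapMatrix ℝ)) := by
      rw [heq]
      simp only [LinearMap.mem_ker, hf, LinearMap.coe_mk, AddHom.coe_mk]
      exact hsum
    obtain ⟨θ, hθ⟩ := hcmem
    exact ⟨θ, by rwa [Matrix.toLin'_apply] at hθ⟩
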